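/- Let E be a set of index triples in {1,2,3}³ such that any two distinct triples in E agree in at most one coordinate. Then: (i) for every normalized tensor c : Fin 3 → Fin 3 → Fin 3 → ℂ supported in E (i.e. c i j k = 0 whenever (i,j,k) ∉ E), all three one-particle reduced density matrices of c are diagonal; and (ii) the set of triples of diagonal-entry vectors { ((Σ_{j,k}|c i j k|²)_i, (Σ_{i,k}|c i j k|²)_j, (Σ_{i,j}|c i j k|²)_k ) : c supported in E, Σ|c|² = 1 } is a convex subset of ℝ⁹. -/

import Mathlib

open scoped BigOperators

/-- The one-particle reduced density matrix of the first qutrit. -/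
noncomputable def rho1 (c : Fin 3 → Fin 3 → Fin 3 → ℂ) : Matrix (Fin 3) (Fin 3) ℂ :=
  Matrix.of fun i i' => ∑ j : Fin 3, ∑ k : Fin 3, c i j k * (starRingEnd ℂ) (c i' j k)

/-- The one-particle reduced density matrix of the second qutrit. -/
noncomputable def rho2 (c : Fin 3 → Fin 3 → Fin 3 → ℂ) : Matrix (Fin 3) (Fin 3) ℂ :=
  Matrix.of fun j j' => ∑ i : Fin 3, ∑ k : Fin 3, c i j k * (starRingEnd ℂ) (c i j' k)

/-- The one-particle reduced density matrix of the third qutrit. -/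
noncomputable def rho3 (c : Fin 3 → Fin 3 → Fin 3 → ℂ) : Matrix (Fin 3) (Fin 3) ℂ :=
  Matrix.of fun k k' => ∑ i : Fin 3, ∑ j : Fin 3, c i j k * (starRingEnd ℂ) (c i j k')

/-- Diagonal entry of the first reduced density matrix. -/
noncomputable def lam1 (c : Fin 3 → Fin 3 → Fin 3 → ℂ) (i : Fin 3) : ℝ :=
  ∑ j : Fin 3, ∑ k : Fin 3, ‖c i j k‖ ^ 2

/-- Diagonal entry of the second reduced density matrix. -/
noncomputable def lam2 (c : Fin 3 → Fin 3 → Fin 3 → ℂ) (j : Fin 3) : ℝ :=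
  ∑ i : Fin 3, ∑ k : Fin 3, ‖c i j k‖ ^ 2

/-- Diagonal entry of the third reduced density matrix. -/
noncomputable def lam3 (c : Fin 3 → Fin 3 → Fin 3 → ℂ) (k : Fin 3) : ℝ :=
  ∑ i : Fin 3, ∑ j : Fin 3, ‖c i j k‖ ^ 2

/-- Lemma 29 of the paper: if any two distinct triples in the support set `E` agree in at
most one coordinate, then every normalized tensor supported in `E` has diagonal reduced
density matrices, and the set of triples of diagonal-entry vectors so obtained is convex. -/
theorem support_set_convexity (E : Set (Fin 3 × Fin 3 × Fin 3))
    (hE : ∀ p ∈ E, ∀ q ∈ E, p ≠ q →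
      ¬(p.1 = q.1 ∧ p.2.1 = q.2.1) ∧ ¬(p.1 = q.1 ∧ p.2.2 = q.2.2) ∧
      ¬(p.2.1 = q.2.1 ∧ p.2.2 = q.2.2)) :
    (∀ c : Fin 3 → Fin 3 → Fin 3 → ℂ,
        (∀ i j k, (i, j, k) ∉ E → c i j k = 0) →
        (∑ i : Fin 3, ∑ j : Fin 3, ∑ k : Fin 3, ‖c i j k‖ ^ 2) = 1 →
        (∀ i i', i ≠ i' → rho1 c i i' = 0) ∧
        (∀ j j', j ≠ j' → rho2 c j j' = 0) ∧
        (∀ k k', k ≠ k' → rho3 c k k' = 0)) ∧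
    Convex ℝ {x : Fin 3 → Fin 3 → ℝ |
        ∃ c : Fin 3 → Fin 3 → Fin 3 → ℂ,
          (∀ i j k, (i, j, k) ∉ E → c i j k = 0) ∧
          (∑ i : Fin 3, ∑ j : Fin 3, ∑ k : Fin 3, ‖c i j k‖ ^ 2) = 1 ∧
          x = ![lam1 c, lam2 c, lam3 c]} := by

  constructor
  · intro c hsupp _hnorm
    have key : ∀ (p q : Fin 3 × Fin 3 × Fin 3), p ≠ q →
        (¬(p.1 = q.1 ∧ p.2.1 = q.2.1) ∧ ¬(p.1 = q.1 ∧ p.2.2 = q.2.2) ∧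
         ¬(p.2.1 = q.2.1 ∧ p.2.2 = q.2.2)) ∨
        c p.1 p.2.1 p.2.2 = 0 ∨ c q.1 q.2.1 q.2.2 = 0 := by
      intro p q hpq
      by_cases hp : p ∈ E
      · by_cases hq : q ∈ E
        · exact Or.inl (hE p hp q hq hpq)
        · exact Or.inr (Or.inr (hsupp q.1 q.2.1 q.2.2 hq))
      · exact Or.inr (Or.inl (hsupp p.1 p.2.1 p.2.2 hp))
    refine ⟨?_, ?_, ?_⟩
    · intro i i' h
      show (∑ j : Fin 3, ∑ k : Fin 3, c i j k * (starRingEnd ℂ) (c i' j k)) = 0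
      refine Finset.sum_eq_zero fun j _ => Finset.sum_eq_zero fun k _ => ?_
      have hpq : (i, j, k) ≠ (i', j, k) := by simp [h]
      rcases key (i, j, k) (i', j, k) hpq with h' | h' | h'
      · exact absurd ⟨rfl, rfl⟩ h'.2.2
      · simp [h']
      · simp [h']
    · intro j j' h
      show (∑ i : Fin 3, ∑ k : Fin 3, c i j k * (starRingEnd ℂ) (c i j' k)) = 0
      refine Finset.sum_eq_zero fun i _ => Finset.sum_eq_zero fun k _ => ?_
      have hpq : (i, j, k) ≠ (i, j', k) := by simp [h]
      rcases key (i, j, k) (i, j', k) hpq with h' | h' | h'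
      · exact absurd ⟨rfl, rfl⟩ h'.2.1
      · simp [h']
      · simp [h']
    · intro k k' h
      show (∑ i : Fin 3, ∑ j : Fin 3, c i j k * (starRingEnd ℂ) (c i j k')) = 0
      refine Finset.sum_eq_zero fun i _ => Finset.sum_eq_zero fun j _ => ?_
      have hpq : (i, j, k) ≠ (i, j, k') := by simp [h]
      rcases key (i, j, k) (i, j, k') hpq with h' | h' | h'
      · exact absurd ⟨rfl, rfl⟩ h'.1
      · simp [h']
      · simp [h']
  · rintro x ⟨c, hc, hcn, rfl⟩ y ⟨d, hd, hdn, rfl⟩ t s ht hs hts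
    set e : Fin 3 → Fin 3 → Fin 3 → ℂ := fun i j k =>
      (Real.sqrt (t * ‖c i j k‖ ^ 2 + s * ‖d i j k‖ ^ 2) : ℝ) with he
    have hnonneg : ∀ i j k, 0 ≤ t * ‖c i j k‖ ^ 2 + s * ‖d i j k‖ ^ 2 := fun i j k =>
      add_nonneg (mul_nonneg ht (sq_nonneg _)) (mul_nonneg hs (sq_nonneg _))
    have hsq : ∀ i j k, ‖e i j k‖ ^ 2 = t * ‖c i j k‖ ^ 2 + s * ‖d i j k‖ ^ 2 := by
      intro i j k
      rw [he]
      rw [Complex.norm_real, Real.norm_eq_abs, sq_abs]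
      exact Real.sq_sqrt (hnonneg i j k)
    refine ⟨e, ?_, ?_, ?_⟩
    · intro i j k hnot
      rw [he]
      simp [hc i j k hnot, hd i j k hnot]
    · simp only [hsq, Finset.sum_add_distrib, ← Finset.mul_sum, hcn, hdn]
      simpa using hts
    · funext m n
      have hsq' : ∀ i j k, ‖e i j k‖ ^ 2 =
          t * ‖c i j k‖ ^ 2 + s * ‖d i j k‖ ^ 2 := by
        intro i j k; simpa using hsq i j k
      fin_cases m <;>
        simp [lam1, lam2, lam3, hsq', Finset.sum_add_distrib, Finset.mul_sum]
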